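/- Let w be a right-infinite, recurrent, aperiodic word with Fac(w) of linear complexity, and let u be a factor of w. Then for all sufficiently large n, the number of factors of w of length n that contain u as a factor is at least n + 1 − |u|. -/

import Mathlib

/-- The factor of `w` of length `n` starting at position `i`. -/
def factorAt {A : Type*} (w : ℕ → A) (i n : ℕ) : List A :=
  (List.range n).map (fun k => w (i + k))

/-- `u` is a (finite, contiguous) factor of the right-infinite word `w`. -/
def IsFactorOf {A : Type*} (u : List A) (w : ℕ → A) : Prop :=
  ∃ i, u = factorAt w i u.length

/-- The set of factors of `w`. -/
def Fac {A : Type*} (w : ℕ → A) : Set (List A) := {u | IsFactorOf u w}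

/-- `w` is recurrent: every factor occurs at arbitrarily large positions. -/
def Recurrent {A : Type*} (w : ℕ → A) : Prop :=
  ∀ u ∈ Fac w, ∀ N : ℕ, ∃ i ≥ N, u = factorAt w i u.length

/-- `w` is uniformly recurrent: each factor occurs in every sufficiently long factor. -/
def UniformlyRecurrent {A : Type*} (w : ℕ → A) : Prop :=
  ∀ u ∈ Fac w, ∃ N : ℕ, ∀ y ∈ Fac w, y.length = N → u <:+: y

/-- `w` is (purely) periodic. -/
def PeriodicWord {A : Type*} (w : ℕ → A) : Prop :=
  ∃ p ≥ 1, ∀ n, w (n + p) = w n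

/-- `w` is eventually periodic. -/
def EventuallyPeriodicWord {A : Type*} (w : ℕ → A) : Prop :=
  ∃ p ≥ 1, ∃ N, ∀ n ≥ N, w (n + p) = w n

/-- The factor complexity function of `w`. -/
noncomputable def cplx {A : Type*} (w : ℕ → A) (n : ℕ) : ℕ :=
  Set.ncard {u | u ∈ Fac w ∧ u.length = n}

/-- A set of finite words is factor-closed. -/
def FactorClosed {A : Type*} (S : Set (List A)) : Prop :=
  ∀ y ∈ S, ∀ u, u <:+: y → u ∈ S

/-- The radical of `w`. -/
def Rad {A : Type*} (w : ℕ → A) : Set (List A) :=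
  {z | z ∈ Fac w ∧ ∀ Y : Finset (List A),
    (∀ y ∈ Y, y ∈ Fac w ∧ z <:+: y) →
    ∃ N : ℕ, ∀ L : List (List A), L.length = N → (∀ y ∈ L, y ∈ Y) →
      L.flatten ∉ Fac w}

/-- The recurrent spectrum of `w`, with classes identified with their factor sets. -/
def RecSpec {A : Type*} (w : ℕ → A) : Set (Set (List A)) :=
  {F | ∃ v : ℕ → A, Recurrent v ∧ F = Fac v ∧ Fac v ⊆ Fac w}

namespace Aux
variable {A : Type*}

@[simp] lemma factorAt_length (w : ℕ → A) (i n : ℕ) : (factorAt w i n).length = n := by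
  simp [factorAt]

@[simp] lemma factorAt_getElem (w : ℕ → A) (i n k : ℕ) (hk : k < (factorAt w i n).length) :
    (factorAt w i n)[k] = w (i + k) := by
  simp [factorAt]

lemma factorAt_take (w : ℕ → A) (i n k : ℕ) :
    (factorAt w i n).take k = factorAt w i (min k n) := by
  apply List.ext_getElem <;> simp

lemma factorAt_drop_take (w : ℕ → A) (i n r m : ℕ) (h : r + m ≤ n) :
    ((factorAt w i n).drop r).take m = factorAt w (i + r) m := by
  apply List.ext_getElem
  · simp; omega
  · intro k h1 h2
    simp at h2 ⊢
    ring_nf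

lemma factorAt_mem_Fac (w : ℕ → A) (i n : ℕ) : factorAt w i n ∈ Fac w :=
  ⟨i, by rw [factorAt_length]⟩

lemma factorAt_eq_iff (w : ℕ → A) (i j n : ℕ) :
    factorAt w i n = factorAt w j n ↔ ∀ t < n, w (i + t) = w (j + t) := by
  constructor
  · intro h t ht
    have h1 := List.getElem_of_eq h (i := t) (by simpa using ht)
    simpa using h1
  · intro h
    apply List.ext_getElem (by simp)
    intro t h1 h2
    simp only [factorAt_getElem]
    exact h t (by simpa using h2)

lemma infix_factorAt_iff (u : List A) (w : ℕ → A) (i n : ℕ) :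
    u <:+: factorAt w i n ↔ ∃ r, r + u.length ≤ n ∧ u = factorAt w (i + r) u.length := by
  constructor
  · rintro ⟨s, t, h⟩
    have hlen : s.length + u.length ≤ n := by
      have := congrArg List.length h
      simp at this; omega
    refine ⟨s.length, hlen, ?_⟩
    rw [← factorAt_drop_take w i n s.length u.length hlen, ← h]
    rw [List.append_assoc, List.drop_left, List.take_left]
  · rintro ⟨r, hr, hu⟩
    rw [hu, ← factorAt_drop_take w i n r u.length hr]
    exact (List.take_prefix _ _).isInfix.trans (List.drop_suffix _ _).isInfix

lemma finite_len (n : ℕ) [Finite A] : {l : List A | l.length = n}.Finite := by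
  have h : {l : List A | l.length = n} ⊆ List.ofFn '' (Set.univ : Set (Fin n → A)) := by
    intro l hl
    refine ⟨fun k => l.get (Fin.cast hl.symm k), trivial, ?_⟩
    apply List.ext_getElem
    · simpa using hl.symm
    · intro k h1 h2; simp
  exact ((Set.finite_univ).image _).subset h

lemma facN_finite (w : ℕ → A) (n : ℕ) [Finite A] :
    {y | y ∈ Fac w ∧ y.length = n}.Finite :=
  (finite_len n).subset (fun _ h => h.2)

lemma mh_step [Finite A] (w : ℕ → A) (hap : ¬ EventuallyPeriodicWord w) (n : ℕ) :
    Set.ncard {y | y ∈ Fac w ∧ y.length = n} < Set.ncard {y | y ∈ Fac w ∧ y.length = n + 1} := by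
  by_contra hle
  push_neg at hle
  apply hap
  have hinj : ∀ i j : ℕ, factorAt w i n = factorAt w j n → w (i + n) = w (j + n) := by
    intro i j hij
    have key : factorAt w i (n+1) = factorAt w j (n+1) := by
      refine Set.inj_on_of_surj_on_of_ncard_le
        (s := {y | y ∈ Fac w ∧ y.length = n + 1}) (t := {y | y ∈ Fac w ∧ y.length = n})
        (fun y _ => y.take n) ?_ ?_ hle
        (a₁ := factorAt w i (n+1)) ⟨factorAt_mem_Fac w i (n+1), factorAt_length w i (n+1)⟩
        (a₂ := factorAt w j (n+1)) ⟨factorAt_mem_Fac w j (n+1), factorAt_length w j (n+1)⟩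
        ?_ (facN_finite w (n+1))
      · rintro y ⟨⟨k, hk⟩, hlen⟩
        rw [hlen] at hk
        rw [hk, factorAt_take]
        exact ⟨factorAt_mem_Fac _ _ _, by rw [factorAt_length]; omega⟩
      · rintro y ⟨⟨k, hk⟩, hlen⟩
        rw [hlen] at hk
        refine ⟨factorAt w k (n+1), ⟨factorAt_mem_Fac _ _ _, factorAt_length _ _ _⟩, ?_⟩
        rw [factorAt_take, hk]
        congr 1
        omega
      · rw [factorAt_take, factorAt_take, Nat.min_eq_left (by omega)]
        exact hij
    have h2 := List.getElem_of_eq key (i := n) (by simp)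
    simpa using h2
  have hpig : ∃ i j, i < j ∧ factorAt w i n = factorAt w j n := by
    have : Finite ↥{y | y ∈ Fac w ∧ y.length = n} := (facN_finite w n).to_subtype
    obtain ⟨a, b, hab, heq⟩ := Finite.exists_ne_map_eq_of_infinite
      (fun i : ℕ => (⟨factorAt w i n, factorAt_mem_Fac _ _ _, factorAt_length _ _ _⟩ :
        ↥{y | y ∈ Fac w ∧ y.length = n}))
    rcases lt_or_gt_of_ne hab with h | h
    · exact ⟨a, b, h, congrArg Subtype.val heq⟩
    · exact ⟨b, a, h, (congrArg Subtype.val heq).symm⟩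
  obtain ⟨i, j, hij, hw0⟩ := hpig
  have prop : ∀ k, factorAt w (i + k) n = factorAt w (j + k) n := by
    intro k
    induction k with
    | zero => simpa using hw0
    | succ k ih =>
      have ihp := (factorAt_eq_iff w _ _ n).1 ih
      have last := hinj (i + k) (j + k) ih
      rw [factorAt_eq_iff]
      intro t ht
      rcases Nat.lt_or_ge (t + 1) n with h | h
      · have := ihp (t + 1) h
        rw [show i + (k+1) + t = i + k + (t+1) from by omega,
            show j + (k+1) + t = j + k + (t+1) from by omega]
        exact this
      · have hteq : t + 1 = n := by omega
        rw [show i + (k+1) + t = i + k + n from by omega,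
            show j + (k+1) + t = j + k + n from by omega]
        exact last
  refine ⟨j - i, by omega, i + n, ?_⟩
  intro m hm
  have hk := hinj (i + (m - (i + n))) (j + (m - (i + n))) (prop (m - (i + n)))
  rw [show i + (m - (i+n)) + n = m from by omega] at hk
  rw [show j + (m - (i+n)) + n = m + (j - i) from by omega] at hk
  exact hk.symm

lemma mh [Finite A] (w : ℕ → A) (hap : ¬ EventuallyPeriodicWord w) (n : ℕ) :
    n + 1 ≤ Set.ncard {y | y ∈ Fac w ∧ y.length = n} := by
  induction n with
  | zero =>
    refine (Set.ncard_pos (facN_finite w 0)).mpr ⟨[], ⟨0, by simp [factorAt]⟩, rfl⟩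
  | succ n ih => exact lt_of_le_of_lt ih (mh_step w hap n)

end Aux

theorem count_factors_containing_ge {A : Type*} [Finite A] (w : ℕ → A)
    (hrec : Recurrent w) (hap : ¬ EventuallyPeriodicWord w)
    (hlin : ∃ C : ℕ, ∀ n ≥ 1, cplx w n ≤ C * n)
    (u : List A) (hu : u ∈ Fac w) :
    ∃ N : ℕ, ∀ n ≥ N,
      n + 1 - u.length ≤ Set.ncard {y | y ∈ Fac w ∧ y.length = n ∧ u <:+: y} := by
  classical
  clear hlin
  by_cases hsynd : ∃ K, ∀ i, ∃ m, i ≤ m ∧ m < i + K ∧ u = factorAt w m u.length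
  · -- syndetic case: every long factor contains u
    obtain ⟨K, hK⟩ := hsynd
    refine ⟨K + u.length, fun n hn => ?_⟩
    have hset : {y | y ∈ Fac w ∧ y.length = n ∧ u <:+: y} = {y | y ∈ Fac w ∧ y.length = n} := by
      ext y
      constructor
      · rintro ⟨h1, h2, _⟩; exact ⟨h1, h2⟩
      · rintro ⟨⟨k, hk⟩, hlen⟩
        refine ⟨⟨k, hk⟩, hlen, ?_⟩
        rw [hlen] at hk
        rw [hk, Aux.infix_factorAt_iff]
        obtain ⟨m, hm1, hm2, hm3⟩ := hK k
        exact ⟨m - k, by omega, by rw [show k + (m - k) = m from by omega]; exact hm3⟩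
    rw [hset]
    have := Aux.mh w hap n
    omega
  · push_neg at hsynd
    refine ⟨u.length, fun n hn => ?_⟩
    obtain ⟨i₀, hi₀n, hi₀⟩ := hrec u hu n
    obtain ⟨g, hg⟩ := hsynd (n + 1)
    have hzfree : ¬ u <:+: factorAt w g (n + u.length) := by
      rw [Aux.infix_factorAt_iff]
      rintro ⟨r, hr, hu'⟩
      exact hg (g + r) (by omega) (by omega) hu'
    obtain ⟨s, hs_ge, hs⟩ := hrec (factorAt w g (n + u.length)) (Aux.factorAt_mem_Fac _ _ _) i₀
    rw [Aux.factorAt_length] at hs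
    have hsfree : ∀ m, s ≤ m → m ≤ s + n → u ≠ factorAt w m u.length := by
      intro m h1 h2 hu'
      apply hzfree
      rw [hs, Aux.infix_factorAt_iff]
      exact ⟨m - s, by omega, by rw [show s + (m - s) = m from by omega]; exact hu'⟩
    set P : ℕ → Prop := fun m => i₀ ≤ m ∧ u = factorAt w m u.length with hP
    set i := Nat.findGreatest P s with hidef
    have hPi₀ : P i₀ := ⟨le_rfl, hi₀⟩
    have hi_ge : i₀ ≤ i := Nat.le_findGreatest hs_ge hPi₀
    have hi_le : i ≤ s := Nat.findGreatest_le s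
    have hiP : P i := Nat.findGreatest_spec hs_ge hPi₀
    have hgap : ∀ t, 0 < t → t ≤ n → u ≠ factorAt w (i + t) u.length := by
      intro t h1 h2 hu'
      rcases le_or_gt (i + t) s with h | h
      · exact Nat.findGreatest_is_greatest (P := P) (k := i + t) (n := s) (by omega) h ⟨by omega, hu'⟩
      · exact hsfree (i + t) (by omega) (by omega) hu'
    set f : ℕ → List A := fun j => factorAt w (i - j) n with hf
    have hmem : ∀ j < n + 1 - u.length, f j ∈ {y | y ∈ Fac w ∧ y.length = n ∧ u <:+: y} := by
      intro j hj
      refine ⟨Aux.factorAt_mem_Fac _ _ _, Aux.factorAt_length _ _ _, ?_⟩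
      rw [Aux.infix_factorAt_iff]
      refine ⟨j, by omega, ?_⟩
      rw [show i - j + j = i from by omega]
      exact hiP.2
    have key : ∀ a b, a < n + 1 - u.length → b < n + 1 - u.length → a < b → f a ≠ f b := by
      intro a b ha hb hab heq
      have e1 : ((f b).drop b).take u.length = u := by
        rw [hf]
        dsimp only
        rw [Aux.factorAt_drop_take w (i - b) n b u.length (by omega),
          show i - b + b = i from by omega]
        exact hiP.2.symm
      rw [← heq] at e1
      have e2 : ((f a).drop b).take u.length = factorAt w (i + (b - a)) u.length := by
        rw [hf]
        dsimp only
        rw [Aux.factorAt_drop_take w (i - a) n b u.length (by omega)]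
        congr 1
        omega
      exact hgap (b - a) (by omega) (by omega) (e1.symm.trans e2)
    have hinj : Set.InjOn f ↑(Finset.range (n + 1 - u.length)) := by
      intro a ha b hb heq
      simp only [Finset.coe_range, Set.mem_Iio] at ha hb
      rcases lt_trichotomy a b with h | h | h
      · exact absurd heq (key a b ha hb h)
      · exact h
      · exact absurd heq.symm (key b a hb ha h)
    have himg : f '' ↑(Finset.range (n + 1 - u.length)) ⊆
        {y | y ∈ Fac w ∧ y.length = n ∧ u <:+: y} := by
      rintro y ⟨j, hj, rfl⟩
      simp only [Finset.coe_range, Set.mem_Iio] at hj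
      exact hmem j hj
    calc n + 1 - u.length
        = (f '' ↑(Finset.range (n + 1 - u.length))).ncard := by
          rw [Set.ncard_image_of_injOn hinj, Set.ncard_coe_finset, Finset.card_range]
      _ ≤ _ := Set.ncard_le_ncard himg
          ((Aux.finite_len n).subset (fun y h => h.2.1))
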